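/- Let n and r be positive natural numbers and let X be a finite set of nonzero vectors in 𝔽₂ⁿ with |X| = m, and set x := m · 2^(−r). If H is a matrix chosen uniformly at random from all r × n matrices over 𝔽₂, then the probability that X meets the random code ker H satisfies P(X ∩ ker H ≠ ∅) ≥ x·(1 − x/2). -/

import Mathlib

open Finset Matrix

lemma zmod2_one' : ∀ {a : ZMod 2}, a ≠ 0 → a = 1 := by decide

lemma zmod2_add_self' (a : ZMod 2) : a + a = 0 := by revert a; decide

lemma single_fiber' {n : ℕ} (v : Fin n → ZMod 2) (hv : v ≠ 0) :
    2 * (univ.filter fun h : Fin n → ZMod 2 => h ⬝ᵥ v = 0).card = 2 ^ n := by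
  obtain ⟨i, hi⟩ : ∃ i, v i ≠ 0 := by
    by_contra h; push_neg at h; exact hv (funext h)
  have hvi : v i = 1 := zmod2_one' hi
  have inv : ∀ h : Fin n → ZMod 2, h + Pi.single i 1 + Pi.single i 1 = h := by
    intro h; funext k
    simp only [Pi.add_apply, Pi.single_apply]
    by_cases hk : k = i <;> simp [hk, zmod2_add_self', add_assoc]
  have key : (univ.filter fun h : Fin n → ZMod 2 => h ⬝ᵥ v = 0).card
      = (univ.filter fun h : Fin n → ZMod 2 => ¬ (h ⬝ᵥ v = 0)).card := by
    refine Finset.card_bij' (fun h _ => h + Pi.single i 1) (fun h _ => h + Pi.single i 1)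
      ?_ ?_ ?_ ?_
    · intro h hh
      simp only [mem_filter, mem_univ, true_and] at hh ⊢
      simp [add_dotProduct, single_dotProduct, hvi, hh]
    · intro h hh
      simp only [mem_filter, mem_univ, true_and] at hh ⊢
      have h1 : h ⬝ᵥ v = 1 := zmod2_one' hh
      simp [add_dotProduct, single_dotProduct, hvi, h1, zmod2_add_self']
    · intro h _; exact inv h
    · intro h _; exact inv h
  have hsum := Finset.card_filter_add_card_filter_not (s := (univ : Finset (Fin n → ZMod 2)))
      (p := fun h => h ⬝ᵥ v = 0)
  have hcard : (univ : Finset (Fin n → ZMod 2)).card = 2 ^ n := by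
    simp [Finset.card_univ]
  omega

lemma pair_surj_aux' {n : ℕ} (v w : Fin n → ZMod 2) (i : Fin n) (hvi : v i = 1) (hwi : w i = 0)
    (hw : w ≠ 0) (a b : ZMod 2) : ∃ h, h ⬝ᵥ v = a ∧ h ⬝ᵥ w = b := by
  obtain ⟨j, hj⟩ : ∃ j, w j ≠ 0 := by
    by_contra h; push_neg at h; exact hw (funext h)
  have hwj : w j = 1 := zmod2_one' hj
  refine ⟨Pi.single i (a + b * v j) + Pi.single j b, ?_, ?_⟩
  · rw [add_dotProduct, single_dotProduct, single_dotProduct, hvi]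
    generalize v j = c
    revert a b c; decide
  · rw [add_dotProduct, single_dotProduct, single_dotProduct, hwi, hwj]
    generalize v j = c
    revert a b c; decide

lemma pair_surj' {n : ℕ} (v w : Fin n → ZMod 2) (hv : v ≠ 0) (hw : w ≠ 0) (hvw : v ≠ w)
    (a b : ZMod 2) : ∃ h, h ⬝ᵥ v = a ∧ h ⬝ᵥ w = b := by
  obtain ⟨i, hi⟩ : ∃ i, v i ≠ w i := by
    by_contra h; push_neg at h; exact hvw (funext h)
  by_cases hwi : w i = 0
  · have hvi : v i = 1 := zmod2_one' (by rw [hwi] at hi; exact hi)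
    exact pair_surj_aux' v w i hvi hwi hw a b
  · have hwi1 : w i = 1 := zmod2_one' hwi
    have hvi : v i = 0 := by
      by_contra h; exact hi ((zmod2_one' h).trans hwi1.symm)
    obtain ⟨h, h1, h2⟩ := pair_surj_aux' w v i hwi1 hvi hv b a
    exact ⟨h, h2, h1⟩

lemma pair_fiber' {n : ℕ} (v w : Fin n → ZMod 2) (hv : v ≠ 0) (hw : w ≠ 0) (hvw : v ≠ w) :
    4 * (univ.filter fun h : Fin n → ZMod 2 => h ⬝ᵥ v = 0 ∧ h ⬝ᵥ w = 0).card ≤ 2 ^ n := by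
  set F : ZMod 2 × ZMod 2 → Finset (Fin n → ZMod 2) :=
    fun p => univ.filter fun h => (h ⬝ᵥ v, h ⬝ᵥ w) = p with hF
  have hle : ∀ p : ZMod 2 × ZMod 2,
      (univ.filter fun h : Fin n → ZMod 2 => h ⬝ᵥ v = 0 ∧ h ⬝ᵥ w = 0).card ≤ (F p).card := by
    intro p
    obtain ⟨g, hg1, hg2⟩ := pair_surj' v w hv hw hvw p.1 p.2
    apply Finset.card_le_card_of_injOn (fun h => h + g)
    · intro h hh
      simp only [Finset.mem_coe, mem_filter, mem_univ, true_and] at hh ⊢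
      simp [hF, add_dotProduct, hh.1, hh.2, hg1, hg2]
    · intro a _ b _ hab
      simpa using congrArg (fun z => z - g) hab
  have hpart : ∑ p : ZMod 2 × ZMod 2, (F p).card = 2 ^ n := by
    have h2n : (univ : Finset (Fin n → ZMod 2)).card = 2 ^ n := by simp
    rw [← h2n]
    exact (Finset.card_eq_sum_card_fiberwise (f := fun h : Fin n → ZMod 2 => (h ⬝ᵥ v, h ⬝ᵥ w))
      (t := univ) (fun _ _ => mem_univ _)).symm
  have h4 : 4 * (univ.filter fun h : Fin n → ZMod 2 => h ⬝ᵥ v = 0 ∧ h ⬝ᵥ w = 0).card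
      ≤ ∑ p : ZMod 2 × ZMod 2, (F p).card := by
    have := Finset.sum_le_sum (s := (univ : Finset (ZMod 2 × ZMod 2)))
      (f := fun _ => (univ.filter fun h : Fin n → ZMod 2 =>
        h ⬝ᵥ v = 0 ∧ h ⬝ᵥ w = 0).card) (g := fun p => (F p).card) (fun p _ => hle p)
    simpa [Finset.sum_const, Finset.card_univ, mul_comm] using this
  omega

open Classical in
lemma matrix_filter_card' {n r : ℕ} (P : (Fin n → ZMod 2) → Prop) [DecidablePred P] :
    (univ.filter fun H : Matrix (Fin r) (Fin n) (ZMod 2) => ∀ i, P (H i)).card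
      = (univ.filter P).card ^ r := by
  rw [← Fintype.card_subtype, ← Fintype.card_subtype]
  have e : {H : Matrix (Fin r) (Fin n) (ZMod 2) // ∀ i, P (H i)}
      ≃ (Fin r → {h : Fin n → ZMod 2 // P h}) := Equiv.subtypePiEquivPi
  rw [Fintype.card_congr e]
  simp [Fintype.card_fun]

theorem prob_meets_random_code_lower_bound_quadratic (n r m : ℕ) (hn : 0 < n) (hr : 0 < r)
    (X : Finset (Fin n → ZMod 2)) (hX : ∀ v ∈ X, v ≠ 0) (hm : X.card = m)
    (x : ℝ) (hx : x = (m : ℝ) * (2 : ℝ) ^ (-(r : ℤ))) :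
    ((Finset.univ.filter
        (fun H : Matrix (Fin r) (Fin n) (ZMod 2) => ∃ v ∈ X, H.mulVec v = 0)).card : ℝ) /
      (Fintype.card (Matrix (Fin r) (Fin n) (ZMod 2)) : ℝ)
      ≥ x * (1 - x / 2) := by
  classical
  have hmulVec : ∀ (H : Matrix (Fin r) (Fin n) (ZMod 2)) (v : Fin n → ZMod 2),
      H.mulVec v = 0 ↔ ∀ i, H i ⬝ᵥ v = 0 := fun H v => funext_iff
  set A : (Fin n → ZMod 2) → Finset (Matrix (Fin r) (Fin n) (ZMod 2)) :=
    fun v => univ.filter fun H => H.mulVec v = 0 with hAdef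
  set B : (Fin n → ZMod 2) → (Fin n → ZMod 2) → Finset (Matrix (Fin r) (Fin n) (ZMod 2)) :=
    fun v w => univ.filter fun H => H.mulVec v = 0 ∧ H.mulVec w = 0 with hBdef
  -- card of A v
  have hA : ∀ v ∈ X, (A v).card = 2 ^ ((n-1) * r) := by
    intro v hv
    have h1 : (A v).card = (univ.filter fun h : Fin n → ZMod 2 => h ⬝ᵥ v = 0).card ^ r := by
      simp only [hAdef]
      have e1 : (univ.filter fun H : Matrix (Fin r) (Fin n) (ZMod 2) => H.mulVec v = 0)
          = univ.filter (fun H => ∀ i, H i ⬝ᵥ v = 0) := by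
        apply Finset.filter_congr
        intro H _
        simp [hmulVec]
      rw [e1]
      convert matrix_filter_card' (fun h : Fin n → ZMod 2 => h ⬝ᵥ v = 0) using 3
    have h2 := single_fiber' v (hX v hv)
    have h3 : (univ.filter fun h : Fin n → ZMod 2 => h ⬝ᵥ v = 0).card = 2 ^ (n-1) := by
      have : 2 ^ n = 2 * 2 ^ (n - 1) := by
        rw [← pow_succ']
        congr 1
        omega
      omega
    rw [h1, h3, ← pow_mul]
  -- card of B v w
  have hB : ∀ v ∈ X, ∀ w ∈ X, v ≠ w → 4 ^ r * (B v w).card ≤ 2 ^ (n * r) := by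
    intro v hv w hw hvw
    have h1 : (B v w).card
        = (univ.filter fun h : Fin n → ZMod 2 => h ⬝ᵥ v = 0 ∧ h ⬝ᵥ w = 0).card ^ r := by
      simp only [hBdef]
      have e1 : (univ.filter fun H : Matrix (Fin r) (Fin n) (ZMod 2) =>
            H.mulVec v = 0 ∧ H.mulVec w = 0)
          = univ.filter (fun H => ∀ i, H i ⬝ᵥ v = 0 ∧ H i ⬝ᵥ w = 0) := by
        apply Finset.filter_congr
        intro H _
        rw [hmulVec, hmulVec, ← forall_and]
      rw [e1]
      convert matrix_filter_card' (fun h : Fin n → ZMod 2 => h ⬝ᵥ v = 0 ∧ h ⬝ᵥ w = 0) using 3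
    have h2 := pair_fiber' v w (hX v hv) (hX w hw) hvw
    calc 4 ^ r * (B v w).card
        = (4 * (univ.filter fun h : Fin n → ZMod 2 =>
            h ⬝ᵥ v = 0 ∧ h ⬝ᵥ w = 0).card) ^ r := by rw [h1, mul_pow]
      _ ≤ (2 ^ n) ^ r := Nat.pow_le_pow_left h2 r
      _ = 2 ^ (n * r) := by rw [← pow_mul]
  -- counting
  set T := Finset.univ.filter
      (fun H : Matrix (Fin r) (Fin n) (ZMod 2) => ∃ v ∈ X, H.mulVec v = 0) with hTdef
  have key1 : ∑ H : Matrix (Fin r) (Fin n) (ZMod 2), (X.filter fun v => H.mulVec v = 0).card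
      = ∑ v ∈ X, (A v).card := by
    simp only [Finset.card_filter, hAdef]
    exact Finset.sum_comm
  have hoff : ∀ H : Matrix (Fin r) (Fin n) (ZMod 2),
      (X.filter fun v => H.mulVec v = 0).offDiag
        = X.offDiag.filter (fun p => H.mulVec p.1 = 0 ∧ H.mulVec p.2 = 0) := by
    intro H; ext p
    simp only [Finset.mem_offDiag, Finset.mem_filter]
    tauto
  have key2 : ∑ H : Matrix (Fin r) (Fin n) (ZMod 2),
      (X.filter fun v => H.mulVec v = 0).offDiag.card
      = ∑ p ∈ X.offDiag, (B p.1 p.2).card := by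
    simp only [hoff, Finset.card_filter, hBdef]
    exact Finset.sum_comm
  have hpoint : ∀ H : Matrix (Fin r) (Fin n) (ZMod 2),
      ((X.filter fun v => H.mulVec v = 0).card : ℝ)
        - ((X.filter fun v => H.mulVec v = 0).offDiag.card : ℝ) / 2
      ≤ (if ∃ v ∈ X, H.mulVec v = 0 then (1:ℝ) else 0) := by
    intro H
    have hod : (X.filter fun v => H.mulVec v = 0).offDiag.card
        = (X.filter fun v => H.mulVec v = 0).card * (X.filter fun v => H.mulVec v = 0).card
          - (X.filter fun v => H.mulVec v = 0).card := Finset.offDiag_card _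
    set k := (X.filter fun v => H.mulVec v = 0).card with hk
    by_cases hex : ∃ v ∈ X, H.mulVec v = 0
    · have hk1 : 1 ≤ k := by
        obtain ⟨v, hv1, hv2⟩ := hex
        exact Finset.card_pos.2 ⟨v, Finset.mem_filter.2 ⟨hv1, hv2⟩⟩
      rw [if_pos hex, hod]
      have hkk : k ≤ k * k := Nat.le_mul_of_pos_left k (by omega)
      rw [Nat.cast_sub hkk]
      push_cast
      rcases Nat.lt_or_ge k 2 with h2 | h2
      · have hk1' : k = 1 := by omega
        rw [hk1']; norm_num
      · have h2' : (2:ℝ) ≤ (k:ℝ) := by exact_mod_cast h2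
        nlinarith
    · have hk0 : k = 0 := by
        rw [hk, Finset.card_eq_zero, Finset.filter_eq_empty_iff]
        intro v hv hz
        exact hex ⟨v, hv, hz⟩
      rw [if_neg hex, hod, hk0]
      norm_num
  have c1 : ∑ H : Matrix (Fin r) (Fin n) (ZMod 2),
      ((X.filter fun v => H.mulVec v = 0).card : ℝ) = ∑ v ∈ X, ((A v).card : ℝ) := by
    exact_mod_cast key1
  have c2 : ∑ H : Matrix (Fin r) (Fin n) (ZMod 2),
      ((X.filter fun v => H.mulVec v = 0).offDiag.card : ℝ)
      = ∑ p ∈ X.offDiag, ((B p.1 p.2).card : ℝ) := by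
    exact_mod_cast key2
  have hsum1 : ∑ v ∈ X, ((A v).card : ℝ)
      - (∑ p ∈ X.offDiag, ((B p.1 p.2).card : ℝ)) / 2 ≤ (T.card : ℝ) := by
    have hTcard : (T.card : ℝ) = ∑ H : Matrix (Fin r) (Fin n) (ZMod 2),
        (if ∃ v ∈ X, H.mulVec v = 0 then (1:ℝ) else 0) := by
      rw [hTdef, Finset.card_filter]
      push_cast
      rfl
    rw [hTcard, ← c1, ← c2, Finset.sum_div, ← Finset.sum_sub_distrib]
    exact Finset.sum_le_sum fun H _ => hpoint H
  have hS1 : ∑ v ∈ X, ((A v).card : ℝ) = (m:ℝ) * 2 ^ ((n-1)*r) := by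
    have hterm : ∀ v ∈ X, ((A v).card : ℝ) = (2:ℝ) ^ ((n-1)*r) := by
      intro v hv; rw [hA v hv]; push_cast; ring
    rw [Finset.sum_congr rfl hterm, Finset.sum_const, hm, nsmul_eq_mul]
  have hS2 : ∑ p ∈ X.offDiag, ((B p.1 p.2).card : ℝ)
      ≤ (m:ℝ) * m * ((2:ℝ) ^ (n*r) / 4 ^ r) := by
    have hterm : ∀ p ∈ X.offDiag, ((B p.1 p.2).card : ℝ) ≤ (2:ℝ) ^ (n*r) / 4 ^ r := by
      intro p hp
      rw [Finset.mem_offDiag] at hp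
      have hb := hB p.1 hp.1 p.2 hp.2.1 hp.2.2
      rw [le_div_iff₀ (by positivity)]
      calc ((B p.1 p.2).card : ℝ) * 4 ^ r = ((4 ^ r * (B p.1 p.2).card : ℕ) : ℝ) := by
            push_cast; ring
        _ ≤ ((2 ^ (n*r) : ℕ) : ℝ) := Nat.cast_le.2 hb
        _ = (2:ℝ) ^ (n*r) := by push_cast; ring
    calc ∑ p ∈ X.offDiag, ((B p.1 p.2).card : ℝ)
        ≤ X.offDiag.card • ((2:ℝ) ^ (n*r) / 4 ^ r) := Finset.sum_le_card_nsmul _ _ _ hterm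
      _ = (X.offDiag.card : ℝ) * ((2:ℝ) ^ (n*r) / 4 ^ r) := nsmul_eq_mul _ _
      _ ≤ (m:ℝ) * m * ((2:ℝ) ^ (n*r) / 4 ^ r) := by
          apply mul_le_mul_of_nonneg_right _ (by positivity)
          rw [Finset.offDiag_card, hm]
          calc ((m * m - m : ℕ) : ℝ) ≤ ((m * m : ℕ) : ℝ) := Nat.cast_le.2 (Nat.sub_le _ _)
            _ = (m:ℝ) * m := by push_cast; ring
  -- final arithmetic
  have hN : (Fintype.card (Matrix (Fin r) (Fin n) (ZMod 2)) : ℝ) = (2:ℝ) ^ (n*r) := by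
    have e0 : Fintype.card (Matrix (Fin r) (Fin n) (ZMod 2))
        = Fintype.card (Fin r → Fin n → ZMod 2) := rfl
    have : Fintype.card (Matrix (Fin r) (Fin n) (ZMod 2)) = 2 ^ (n*r) := by
      rw [e0]; simp [Fintype.card_fun, ← pow_mul, mul_comm]
    rw [this]; push_cast; ring
  rw [hN, ge_iff_le, le_div_iff₀ (by positivity)]
  have hQ : (0:ℝ) < (2:ℝ) ^ r := by positivity
  have hPQ : (2:ℝ) ^ ((n-1)*r) * (2:ℝ) ^ r = (2:ℝ) ^ (n*r) := by
    obtain ⟨k, rfl⟩ : ∃ k, n = k + 1 := ⟨n - 1, by omega⟩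
    rw [← pow_add]; congr 1; simp; ring
  have h4Q : (4:ℝ) ^ r = (2:ℝ) ^ r * (2:ℝ) ^ r := by
    rw [show (4:ℝ) = 2 * 2 by norm_num, mul_pow]
  have hxQ : x = (m:ℝ) / (2:ℝ) ^ r := by
    rw [hx, _root_.zpow_neg, zpow_natCast, div_eq_mul_inv]
  have keyeq : x * (1 - x / 2) * (2:ℝ) ^ (n*r)
      = (m:ℝ) * 2 ^ ((n-1)*r) - (m:ℝ) * m * ((2:ℝ) ^ (n*r) / 4 ^ r) / 2 := by
    rw [hxQ, h4Q, ← hPQ]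
    field_simp
  rw [keyeq]
  linarith [hsum1, hS1.symm.le, hS2]
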